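/- Let n be even and let σ : Fin n → Fin n be a fixed-point-free involution (σ ∘ σ = id and σ i ≠ i for all i). Then (1/2) · Σ_{i : Fin n} H[⟨X i, X (σ i)⟩] is greater than or equal to the minimum, over all j : Fin n and all p : Fin n → Fin n that are arborescences toward j, of the tree cost H[X j] + Σ_{i ≠ j} H[X i | X (p i)]. (That is, the sum rate of any pairwise-matching allocation is at least the minimum arborescence sum rate.) -/

import Mathlib

open MeasureTheory ProbabilityTheory

/-- Shannon entropy (in nats) of a random variable. -/
noncomputable def shEntropy {Ω : Type*} [MeasurableSpace Ω] {S : Type*}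
    (μ : Measure Ω) (X : Ω → S) : ℝ :=
  ∑' x : S, Real.negMulLog (μ (X ⁻¹' {x})).toReal

/-- Conditional Shannon entropy `H[X | Y]`. -/
noncomputable def shCondEntropy {Ω : Type*} [MeasurableSpace Ω] {S T : Type*}
    (μ : Measure Ω) (X : Ω → S) (Y : Ω → T) : ℝ :=
  ∑' y : T, (μ (Y ⁻¹' {y})).toReal * shEntropy (ProbabilityTheory.cond μ (Y ⁻¹' {y})) X

/-- The pairwise property of a rate assignment `R`: for each source `X i` there is an
ordered sequence of sources `X (s 1), …, X (s k)` with `R (s 1) ≥ H[X (s 1)]`,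
`R (s j) ≥ H[X (s j) | X (s (j-1))]` for `2 ≤ j ≤ k`, and `R i ≥ H[X i | X (s k)]`. -/
def PairwiseProperty {Ω S : Type*} [MeasurableSpace Ω] {n : ℕ}
    (μ : Measure Ω) (X : Fin n → Ω → S) (R : Fin n → ℝ) : Prop :=
  ∀ i : Fin n, ∃ (k : ℕ) (s : ℕ → Fin n), 1 ≤ k ∧
    R (s 1) ≥ shEntropy μ (X (s 1)) ∧
    (∀ j : ℕ, 2 ≤ j → j ≤ k → R (s j) ≥ shCondEntropy μ (X (s j)) (X (s (j - 1)))) ∧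
    R i ≥ shCondEntropy μ (X i) (X (s k))

/-- The decoding relation of a rate assignment: `a` can help decode `b` if
`H[X b | X a] ≤ R b`. -/
def decRel {Ω S : Type*} [MeasurableSpace Ω] {n : ℕ}
    (μ : Measure Ω) (X : Fin n → Ω → S) (R : Fin n → ℝ) : Fin n → Fin n → Prop :=
  fun a b => shCondEntropy μ (X b) (X a) ≤ R b

/-- `p` is an arborescence toward the root `j`: iterating `p` from any node reaches `j`. -/
def IsArborescence {n : ℕ} (j : Fin n) (p : Fin n → Fin n) : Prop :=
  ∀ i : Fin n, ∃ m : ℕ, p^[m] i = j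

/-- The tree rate assignment associated with a root `j` and parent map `p`. -/
noncomputable def treeRate {Ω S : Type*} [MeasurableSpace Ω] {n : ℕ}
    (μ : Measure Ω) (X : Fin n → Ω → S) (j : Fin n) (p : Fin n → Fin n) : Fin n → ℝ :=
  fun i => if i = j then shEntropy μ (X j) else shCondEntropy μ (X i) (X (p i))

/-- The cost (sum rate) of the tree rate assignment with root `j` and parent map `p`. -/
noncomputable def treeCost {Ω S : Type*} [MeasurableSpace Ω] {n : ℕ}
    (μ : Measure Ω) (X : Fin n → Ω → S) (j : Fin n) (p : Fin n → Fin n) : ℝ :=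
  shEntropy μ (X j) + ∑ i ∈ Finset.univ.erase j, shCondEntropy μ (X i) (X (p i))


section helpers
set_option linter.unusedSectionVars false
open Real

variable {Ω S T : Type*} [MeasurableSpace Ω] [MeasurableSpace S] [MeasurableSingletonClass S]
  [MeasurableSpace T] [MeasurableSingletonClass T]

lemma shEntropy_eq_sum (ν : Measure Ω) {X : Ω → S} {F : Finset S}
    (hF : Set.range X ⊆ ↑F) :
    shEntropy ν X = ∑ x ∈ F, Real.negMulLog (ν (X ⁻¹' {x})).toReal := by
  refine tsum_eq_sum ?_
  intro x hx
  have : X ⁻¹' {x} = ∅ := Set.preimage_singleton_eq_empty.2 (fun h => hx (hF h))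
  simp [this]

lemma shCondEntropy_eq_sum (ν : Measure Ω) {Y : Ω → T} {F : Finset T}
    (hF : Set.range Y ⊆ ↑F) (X : Ω → S) :
    shCondEntropy ν X Y
      = ∑ y ∈ F, (ν (Y ⁻¹' {y})).toReal * shEntropy (ProbabilityTheory.cond ν (Y ⁻¹' {y})) X := by
  refine tsum_eq_sum ?_
  intro y hy
  have : Y ⁻¹' {y} = ∅ := Set.preimage_singleton_eq_empty.2 (fun h => hy (hF h))
  simp [this]

lemma sum_measure_preimage_inter (ν : Measure Ω) {X : Ω → S} (hX : Measurable X)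
    {F : Finset S} (hF : Set.range X ⊆ ↑F) {B : Set Ω} (hB : MeasurableSet B) :
    ∑ x ∈ F, ν (X ⁻¹' {x} ∩ B) = ν B := by
  rw [← measure_biUnion_finset]
  · congr 1
    ext ω
    simp only [Set.mem_iUnion, Set.mem_inter_iff, Set.mem_preimage, Set.mem_singleton_iff,
      exists_prop]
    constructor
    · rintro ⟨x, _, _, h⟩; exact h
    · intro h; exact ⟨X ω, hF (Set.mem_range_self ω), rfl, h⟩
  · intro x hx y hy hxy
    refine Disjoint.mono Set.inter_subset_left Set.inter_subset_left ?_
    rw [Set.disjoint_left]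
    intro ω hωx hωy
    exact hxy (hωx.symm.trans hωy)
  · intro x _; exact (hX (measurableSet_singleton x)).inter hB

lemma sum_toReal_measure_preimage_inter (ν : Measure Ω) [IsFiniteMeasure ν] {X : Ω → S}
    (hX : Measurable X) {F : Finset S} (hF : Set.range X ⊆ ↑F) {B : Set Ω}
    (hB : MeasurableSet B) :
    ∑ x ∈ F, (ν (X ⁻¹' {x} ∩ B)).toReal = (ν B).toReal := by
  rw [← ENNReal.toReal_sum (fun a _ => measure_ne_top ν _),
    sum_measure_preimage_inter ν hX hF hB]

lemma shEntropy_pair (μ : Measure Ω) [IsProbabilityMeasure μ]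
    {X : Ω → S} {Y : Ω → T} (hX : Measurable X) (hY : Measurable Y)
    (hfX : (Set.range X).Finite) (hfY : (Set.range Y).Finite) :
    shEntropy μ (fun ω => (X ω, Y ω)) = shEntropy μ X + shCondEntropy μ Y X := by
  classical
  set FX := hfX.toFinset with hFXdef
  set FY := hfY.toFinset with hFYdef
  have hFX : Set.range X ⊆ ↑FX := by simp [hFXdef]
  have hFY : Set.range Y ⊆ ↑FY := by simp [hFYdef]
  have hpre : ∀ x y, (fun ω => (X ω, Y ω)) ⁻¹' {(x, y)} = X ⁻¹' {x} ∩ Y ⁻¹' {y} := by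
    intro x y; ext ω; simp [Prod.ext_iff]
  have hrange : Set.range (fun ω => (X ω, Y ω)) ⊆ ↑(FX ×ˢ FY) := by
    rintro _ ⟨ω, rfl⟩
    simp only [Finset.coe_product, Set.mem_prod]
    exact ⟨hFX (Set.mem_range_self ω), hFY (Set.mem_range_self ω)⟩
  rw [shEntropy_eq_sum μ hrange, shEntropy_eq_sum μ hFX, shCondEntropy_eq_sum μ hFX Y,
    Finset.sum_product, ← Finset.sum_add_distrib]
  refine Finset.sum_congr rfl fun x _ => ?_
  by_cases hpx : μ (X ⁻¹' {x}) = 0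
  · have h0 : ∀ y : T, μ (X ⁻¹' {x} ∩ Y ⁻¹' {y}) = 0 :=
      fun y => measure_mono_null Set.inter_subset_left hpx
    simp only [hpre, h0, hpx]
    simp
  · have hA : MeasurableSet (X ⁻¹' {x}) := hX (measurableSet_singleton x)
    set p : ℝ := (μ (X ⁻¹' {x})).toReal with hp
    have hppos : 0 < p := ENNReal.toReal_pos hpx (measure_ne_top μ _)
    have hcond : ∀ y : T, ((ProbabilityTheory.cond μ (X ⁻¹' {x})) (Y ⁻¹' {y})).toReal
        = (μ (X ⁻¹' {x} ∩ Y ⁻¹' {y})).toReal / p := by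
      intro y
      rw [ProbabilityTheory.cond_apply hA, ENNReal.toReal_mul, ENNReal.toReal_inv, ← hp,
        div_eq_inv_mul]
    have hcent : shEntropy (ProbabilityTheory.cond μ (X ⁻¹' {x})) Y
        = ∑ y ∈ FY, Real.negMulLog ((μ (X ⁻¹' {x} ∩ Y ⁻¹' {y})).toReal / p) := by
      rw [shEntropy_eq_sum _ hFY]
      exact Finset.sum_congr rfl fun y _ => by rw [hcond]
    have hsumq : ∑ y ∈ FY, (μ (X ⁻¹' {x} ∩ Y ⁻¹' {y})).toReal = p := by
      rw [hp]
      rw [← sum_toReal_measure_preimage_inter μ hY hFY hA]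
      exact Finset.sum_congr rfl fun y _ => by rw [Set.inter_comm]
    have hsplit : ∀ q : ℝ, Real.negMulLog q
        = q / p * Real.negMulLog p + p * Real.negMulLog (q / p) := by
      intro q
      have h1 : q = p * (q / p) := by field_simp
      calc Real.negMulLog q = Real.negMulLog (p * (q / p)) := by rw [← h1]
        _ = q / p * Real.negMulLog p + p * Real.negMulLog (q / p) := Real.negMulLog_mul p (q / p)
    calc ∑ y ∈ FY, Real.negMulLog (μ ((fun ω => (X ω, Y ω)) ⁻¹' {(x, y)})).toReal
        = ∑ y ∈ FY, ((μ (X ⁻¹' {x} ∩ Y ⁻¹' {y})).toReal / p * Real.negMulLog p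
            + p * Real.negMulLog ((μ (X ⁻¹' {x} ∩ Y ⁻¹' {y})).toReal / p)) := by
          refine Finset.sum_congr rfl fun y _ => ?_
          rw [hpre, hsplit]
      _ = (∑ y ∈ FY, (μ (X ⁻¹' {x} ∩ Y ⁻¹' {y})).toReal) / p * Real.negMulLog p
            + p * ∑ y ∈ FY, Real.negMulLog ((μ (X ⁻¹' {x} ∩ Y ⁻¹' {y})).toReal / p) := by
          rw [Finset.sum_add_distrib, ← Finset.sum_mul, ← Finset.sum_div, Finset.mul_sum]
      _ = Real.negMulLog p + p * shEntropy (ProbabilityTheory.cond μ (X ⁻¹' {x})) Y := by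
          rw [hsumq, div_self hppos.ne', one_mul, hcent]

lemma shCondEntropy_le_shEntropy (μ : Measure Ω) [IsProbabilityMeasure μ]
    {X : Ω → S} {Y : Ω → T} (hX : Measurable X) (hY : Measurable Y)
    (hfX : (Set.range X).Finite) (hfY : (Set.range Y).Finite) :
    shCondEntropy μ Y X ≤ shEntropy μ Y := by
  classical
  set FX := hfX.toFinset with hFXdef
  set FY := hfY.toFinset with hFYdef
  have hFX : Set.range X ⊆ ↑FX := by simp [hFXdef]
  have hFY : Set.range Y ⊆ ↑FY := by simp [hFYdef]
  set r : S → T → ℝ := fun x y => ((ProbabilityTheory.cond μ (X ⁻¹' {x})) (Y ⁻¹' {y})).toReal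
    with hr
  set p : S → ℝ := fun x => (μ (X ⁻¹' {x})).toReal with hpdef
  have hrnn : ∀ x y, 0 ≤ r x y := fun x y => ENNReal.toReal_nonneg
  have hpnn : ∀ x, 0 ≤ p x := fun x => ENNReal.toReal_nonneg
  have hpsum : ∑ x ∈ FX, p x = 1 := by
    have := sum_toReal_measure_preimage_inter μ hX hFX MeasurableSet.univ
    simpa [hpdef] using this
  have hmix : ∀ y : T, (μ (Y ⁻¹' {y})).toReal = ∑ x ∈ FX, p x * r x y := by
    intro y
    rw [← sum_toReal_measure_preimage_inter μ hX hFX (hY (measurableSet_singleton y))]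
    refine Finset.sum_congr rfl fun x _ => ?_
    by_cases hpx : μ (X ⁻¹' {x}) = 0
    · have h0 : μ (X ⁻¹' {x} ∩ Y ⁻¹' {y}) = 0 :=
        measure_mono_null Set.inter_subset_left hpx
      simp [hpdef, h0, hpx]
    · have hA : MeasurableSet (X ⁻¹' {x}) := hX (measurableSet_singleton x)
      have hppos : 0 < p x := ENNReal.toReal_pos hpx (measure_ne_top μ _)
      rw [hr]
      simp only
      rw [ProbabilityTheory.cond_apply hA, ENNReal.toReal_mul, ENNReal.toReal_inv]
      rw [hpdef]
      field_simp
      exact (mul_div_cancel_right₀ _ hppos.ne').symm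
  have hcent : ∀ x : S, shEntropy (ProbabilityTheory.cond μ (X ⁻¹' {x})) Y
      = ∑ y ∈ FY, Real.negMulLog (r x y) := fun x => shEntropy_eq_sum _ hFY
  rw [shCondEntropy_eq_sum μ hFX Y, shEntropy_eq_sum μ hFY]
  calc ∑ x ∈ FX, (μ (X ⁻¹' {x})).toReal * shEntropy (ProbabilityTheory.cond μ (X ⁻¹' {x})) Y
      = ∑ x ∈ FX, ∑ y ∈ FY, p x * Real.negMulLog (r x y) := by
        refine Finset.sum_congr rfl fun x _ => ?_
        rw [hcent, Finset.mul_sum]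
    _ = ∑ y ∈ FY, ∑ x ∈ FX, p x * Real.negMulLog (r x y) := Finset.sum_comm
    _ ≤ ∑ y ∈ FY, Real.negMulLog (μ (Y ⁻¹' {y})).toReal := by
        refine Finset.sum_le_sum fun y _ => ?_
        rw [hmix y]
        have := Real.concaveOn_negMulLog.le_map_sum (t := FX) (w := p) (p := fun x => r x y)
          (fun x _ => hpnn x) hpsum (fun x _ => Set.mem_Ici.2 (hrnn x y))
        simpa only [smul_eq_mul] using this

lemma shEntropy_pair_comm (μ : Measure Ω) (X : Ω → S) (Y : Ω → T) :
    shEntropy μ (fun ω => (X ω, Y ω)) = shEntropy μ (fun ω => (Y ω, X ω)) := by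
  rw [shEntropy, shEntropy, ← Equiv.tsum_eq (Equiv.prodComm T S)]
  refine tsum_congr fun q => ?_
  have : (fun ω => (X ω, Y ω)) ⁻¹' {Equiv.prodComm T S q} = (fun ω => (Y ω, X ω)) ⁻¹' {q} := by
    obtain ⟨a, b⟩ := q
    ext ω
    simp [Prod.ext_iff, and_comm]
  rw [this]

end helpers

/-- The sum rate of any pairwise matching allocation is at least the minimum
arborescence sum rate. -/
theorem matching_sumRate_ge_min_arborescence
    {Ω S : Type*} [MeasurableSpace Ω] [MeasurableSpace S] [MeasurableSingletonClass S]
    (μ : Measure Ω) [IsProbabilityMeasure μ] {n : ℕ} (hn : 1 ≤ n) (hneven : Even n)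
    (X : Fin n → Ω → S) (hX : ∀ i, Measurable (X i))
    (hfin : ∀ i, (Set.range (X i)).Finite)
    (σ : Fin n → Fin n) (hσ : σ ∘ σ = id) (hσ' : ∀ i, σ i ≠ i) :
    ∃ m : ℝ,
      IsLeast {c : ℝ | ∃ (j : Fin n) (p : Fin n → Fin n),
        IsArborescence j p ∧ c = treeCost μ X j p} m ∧
      m ≤ (1 / 2) * ∑ i : Fin n, shEntropy μ (fun ω => (X i ω, X (σ i) ω)) := by
  classical
  have hσσ : ∀ i, σ (σ i) = i := fun i => congrFun hσ i
  set j : Fin n := ⟨0, hn⟩ with hj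
  set P : Fin n → Prop := fun i => i = j ∨ (i ≠ σ j ∧ i < σ i) with hP
  set p : Fin n → Fin n := fun i => if P i then j else σ i with hpdef
  have hPj : P j := Or.inl rfl
  have hPσj : ¬ P (σ j) := by
    rintro (h | ⟨h, _⟩)
    · exact hσ' j h
    · exact h rfl
  have hP1 : ∀ i, P i → ¬ P (σ i) := by
    intro i hi
    rcases hi with rfl | ⟨hne, hlt⟩
    · exact hPσj
    · rintro (h | ⟨_, hlt'⟩)
      · exact hne (by rw [← hσσ i, h])
      · rw [hσσ i] at hlt'
        exact absurd hlt (not_lt.2 hlt'.le)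
  have hP2 : ∀ i, ¬ P i → P (σ i) := by
    intro i hi
    by_cases hij : i = σ j
    · left; rw [hij, hσσ]
    · have hne : i ≠ j := fun h => hi (Or.inl h)
      have hnlt : ¬ i < σ i := fun h => hi (Or.inr ⟨hij, h⟩)
      have hlt : σ i < i := lt_of_le_of_ne (not_lt.1 hnlt) (hσ' i)
      right
      refine ⟨fun h => hne ?_, ?_⟩
      · rw [← hσσ i, h, hσσ]
      · rw [hσσ i]; exact hlt
  have hparb : IsArborescence j p := by
    intro i
    by_cases hi : P i
    · by_cases hij : i = j
      · exact ⟨0, hij⟩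
      · exact ⟨1, by simp [hpdef, hi]⟩
    · refine ⟨2, ?_⟩
      have h1 : p i = σ i := by simp [hpdef, hi]
      have h2 : p (σ i) = j := by simp [hpdef, hP2 i hi]
      simp [Function.iterate_succ_apply, h1, h2]
  set F : Finset ℝ := ((Finset.univ : Finset (Fin n × (Fin n → Fin n))).filter
      (fun q => IsArborescence q.1 q.2)).image (fun q => treeCost μ X q.1 q.2) with hF
  have hmemF : treeCost μ X j p ∈ F :=
    Finset.mem_image.2 ⟨(j, p), Finset.mem_filter.2 ⟨Finset.mem_univ _, hparb⟩, rfl⟩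
  have hFne : F.Nonempty := ⟨_, hmemF⟩
  have hTF : ∀ c : ℝ, (∃ (a : Fin n) (b : Fin n → Fin n),
      IsArborescence a b ∧ c = treeCost μ X a b) ↔ c ∈ F := by
    intro c
    simp only [hF, Finset.mem_image, Finset.mem_filter, Finset.mem_univ, true_and]
    constructor
    · rintro ⟨a, b, hab, rfl⟩; exact ⟨(a, b), hab, rfl⟩
    · rintro ⟨⟨a, b⟩, hab, rfl⟩; exact ⟨a, b, hab, rfl⟩
  -- the main estimate
  set f : Fin n → ℝ := fun i => shEntropy μ (X i) + shCondEntropy μ (X (σ i)) (X i) with hfdef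
  have hchain2 : ∀ (a b : Fin n), shEntropy μ (fun ω => (X a ω, X b ω))
      = shEntropy μ (X a) + shCondEntropy μ (X b) (X a) :=
    fun a b => shEntropy_pair μ (hX a) (hX b) (hfin a) (hfin b)
  have hfsymm : ∀ i, f (σ i) = f i := by
    intro i
    simp only [hfdef, hσσ i]
    rw [← hchain2 (σ i) i, ← hchain2 i (σ i)]
    exact (shEntropy_pair_comm μ (X (σ i)) (X i)).trans
      (by exact (shEntropy_pair_comm μ (X i) (X (σ i))).symm ▸ rfl)
  set reps : Finset (Fin n) := Finset.univ.filter P with hreps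
  set nonreps : Finset (Fin n) := Finset.univ.filter (fun i => ¬ P i) with hnonreps
  have hjreps : j ∈ reps := Finset.mem_filter.2 ⟨Finset.mem_univ _, hPj⟩
  have hmem_reps : ∀ i, i ∈ reps ↔ P i := by
    intro i; simp [hreps]
  have hmem_nonreps : ∀ i, i ∈ nonreps ↔ ¬ P i := by
    intro i; simp [hnonreps]
  have hbij : ∑ i ∈ nonreps, f i = ∑ i ∈ reps, f i := by
    refine Finset.sum_nbij' σ σ ?_ ?_ ?_ ?_ ?_
    · intro a ha; exact (hmem_reps _).2 (hP2 a ((hmem_nonreps a).1 ha))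
    · intro a ha; exact (hmem_nonreps _).2 (hP1 a ((hmem_reps a).1 ha))
    · intro a _; exact hσσ a
    · intro a _; exact hσσ a
    · intro a _; exact (hfsymm a).symm
  have hbij2 : ∑ i ∈ nonreps, shCondEntropy μ (X i) (X (σ i))
      = ∑ i ∈ reps, shCondEntropy μ (X (σ i)) (X i) := by
    refine Finset.sum_nbij' σ σ ?_ ?_ ?_ ?_ ?_
    · intro a ha; exact (hmem_reps _).2 (hP2 a ((hmem_nonreps a).1 ha))
    · intro a ha; exact (hmem_nonreps _).2 (hP1 a ((hmem_reps a).1 ha))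
    · intro a _; exact hσσ a
    · intro a _; exact hσσ a
    · intro a _; rw [hσσ a]
  have hdisj : Disjoint reps nonreps := Finset.disjoint_filter_filter_not _ _ P
  have htot : ∑ i : Fin n, f i = ∑ i ∈ reps, f i + ∑ i ∈ nonreps, f i := by
    rw [← Finset.sum_union hdisj, hreps, hnonreps, Finset.filter_union_filter_not_eq]
  have herase : Finset.univ.erase j = reps.erase j ∪ nonreps := by
    ext i
    simp only [Finset.mem_erase, Finset.mem_union, Finset.mem_filter, Finset.mem_univ, true_and,
      hreps, hnonreps, and_true]
    constructor
    · intro hi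
      by_cases h : P i
      · exact Or.inl ⟨hi, h⟩
      · exact Or.inr h
    · rintro (⟨hij, _⟩ | h)
      · exact hij
      · exact fun hh => h (hh ▸ hPj)
  have hdisj' : Disjoint (reps.erase j) nonreps := hdisj.mono_left (Finset.erase_subset _ _)
  have hcost : treeCost μ X j p ≤ ∑ i ∈ reps, f i := by
    rw [treeCost, herase, Finset.sum_union hdisj']
    have h1 : ∑ i ∈ reps.erase j, shCondEntropy μ (X i) (X (p i))
        ≤ ∑ i ∈ reps.erase j, shEntropy μ (X i) := by
      refine Finset.sum_le_sum fun i hi => ?_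
      have hPi : P i := (hmem_reps i).1 (Finset.mem_of_mem_erase hi)
      have hpi : p i = j := by simp [hpdef, hPi]
      rw [hpi]
      exact shCondEntropy_le_shEntropy μ (hX j) (hX i) (hfin j) (hfin i)
    have h2 : ∑ i ∈ nonreps, shCondEntropy μ (X i) (X (p i))
        = ∑ i ∈ reps, shCondEntropy μ (X (σ i)) (X i) := by
      rw [← hbij2]
      refine Finset.sum_congr rfl fun i hi => ?_
      have hPi : ¬ P i := (hmem_nonreps i).1 hi
      have hpi : p i = σ i := by simp [hpdef, hPi]
      rw [hpi]
    have h3 : shEntropy μ (X j) + ∑ i ∈ reps.erase j, shEntropy μ (X i)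
        = ∑ i ∈ reps, shEntropy μ (X i) := by
      simpa using Finset.add_sum_erase reps (fun i => shEntropy μ (X i)) hjreps
    have h4 : ∑ i ∈ reps, f i
        = ∑ i ∈ reps, shEntropy μ (X i) + ∑ i ∈ reps, shCondEntropy μ (X (σ i)) (X i) := by
      rw [← Finset.sum_add_distrib]
    linarith
  have hhalf : (1 / 2 : ℝ) * ∑ i : Fin n, shEntropy μ (fun ω => (X i ω, X (σ i) ω))
      = ∑ i ∈ reps, f i := by
    have hs : ∑ i : Fin n, shEntropy μ (fun ω => (X i ω, X (σ i) ω)) = ∑ i : Fin n, f i :=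
      Finset.sum_congr rfl fun i _ => hchain2 i (σ i)
    rw [hs, htot, hbij]
    ring
  refine ⟨F.min' hFne, ⟨?_, ?_⟩, ?_⟩
  · exact (hTF _).2 (F.min'_mem hFne)
  · intro c hc
    exact F.min'_le c ((hTF c).1 hc)
  · calc F.min' hFne ≤ treeCost μ X j p := F.min'_le _ hmemF
      _ ≤ ∑ i ∈ reps, f i := hcost
      _ = (1 / 2 : ℝ) * ∑ i : Fin n, shEntropy μ (fun ω => (X i ω, X (σ i) ω)) := hhalf.symm
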